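/- For a two-component mixture hazard h_Y(y) = w(y)h_{T_1}(y) + (1 − w(y))h_{T_2}(y) with weight w(y) = p S_{T_1}(y)/(p S_{T_1}(y) + (1−p) S_{T_2}(y)), where T_j ~ BS(α_j, β_j) and the hazard of BS(α,β) tends to 1/(2α²β) as y → ∞: if α_2²β_2 < α_1²β_1 then lim_{y→∞} h_Y(y) = 1/(2α_1²β_1), and if α_2²β_2 > α_1²β_1 then lim_{y→∞} h_Y(y) = 1/(2α_2²β_2). -/

import Mathlib

open Real MeasureTheory Filter Topology ProbabilityTheory

noncomputable def stdNormalPdf (x : ℝ) : ℝ := (Real.sqrt (2 * Real.pi))⁻¹ * Real.exp (-x ^ 2 / 2)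

noncomputable def stdNormalCdf (x : ℝ) : ℝ := ∫ t in Set.Iic x, stdNormalPdf t

noncomputable def aBS (α β t : ℝ) : ℝ := (Real.sqrt (t / β) - Real.sqrt (β / t)) / α

noncomputable def ABS (α β t : ℝ) : ℝ := t ^ ((-3 : ℝ) / 2) * (t + β) / (2 * α * Real.sqrt β)

noncomputable def bsPdf (α β t : ℝ) : ℝ := stdNormalPdf (aBS α β t) * ABS α β t

lemma stdNormalPdf_pos (x : ℝ) : 0 < stdNormalPdf x := by
  unfold stdNormalPdf
  positivity

lemma continuous_stdNormalPdf : Continuous stdNormalPdf := by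
  unfold stdNormalPdf; fun_prop

lemma integrable_stdNormalPdf : Integrable stdNormalPdf := by
  have h : Integrable (fun x : ℝ => Real.exp (-(1/2 : ℝ) * x ^ 2)) := integrable_exp_neg_mul_sq (by norm_num)
  have := h.const_mul (Real.sqrt (2 * Real.pi))⁻¹
  refine this.congr (Filter.Eventually.of_forall fun x => ?_)
  unfold stdNormalPdf
  ring_nf

lemma integral_stdNormalPdf : ∫ x, stdNormalPdf x = 1 := by
  have h : ∫ x : ℝ, Real.exp (-(1/2 : ℝ) * x ^ 2) = Real.sqrt (2 * Real.pi) := by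
    rw [integral_gaussian]
    norm_num [div_div_eq_mul_div, mul_comm]
  unfold stdNormalPdf
  rw [MeasureTheory.integral_const_mul]
  have heq : (fun x : ℝ => Real.exp (-x ^ 2 / 2)) = fun x : ℝ => Real.exp (-(1/2:ℝ) * x ^ 2) := by
    funext x; ring_nf
  rw [heq, h, inv_mul_cancel₀]
  positivity

lemma stdNormalCdf_lt_one (x : ℝ) : stdNormalCdf x < 1 := by
  unfold stdNormalCdf
  have h1 : (∫ t in Set.Iic x, stdNormalPdf t) + ∫ t in Set.Ioi x, stdNormalPdf t = 1 := by
    rw [← integral_stdNormalPdf]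
    rw [← MeasureTheory.setIntegral_union (Set.Iic_disjoint_Ioi le_rfl) measurableSet_Ioi
      integrable_stdNormalPdf.integrableOn integrable_stdNormalPdf.integrableOn]
    rw [Set.Iic_union_Ioi]
    simp [Measure.restrict_univ]
  have h2 : 0 < ∫ t in Set.Ioi x, stdNormalPdf t := by
    rw [setIntegral_pos_iff_support_of_nonneg_ae]
    · have : Function.support stdNormalPdf = Set.univ := by
        ext t; simp [Function.mem_support, (stdNormalPdf_pos t).ne']
      rw [this, Set.univ_inter]
      simp [Real.volume_Ioi]
    · exact Filter.Eventually.of_forall fun t => (stdNormalPdf_pos t).le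
    · exact integrable_stdNormalPdf.integrableOn
  linarith

lemma hasDerivAt_stdNormalCdf (x : ℝ) : HasDerivAt stdNormalCdf (stdNormalPdf x) x := by
  have key : stdNormalCdf = fun y => stdNormalCdf 0 + ∫ t in (0:ℝ)..y, stdNormalPdf t := by
    funext y
    have := intervalIntegral.integral_Iic_sub_Iic (integrable_stdNormalPdf.integrableOn (s := Set.Iic 0))
      (integrable_stdNormalPdf.integrableOn (s := Set.Iic y))
    unfold stdNormalCdf
    linarith [this]
  rw [key]
  have h := intervalIntegral.integral_hasDerivAt_right
    (integrable_stdNormalPdf.intervalIntegrable (a := 0) (b := x))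
    (continuous_stdNormalPdf.stronglyMeasurableAtFilter _ _)
    continuous_stdNormalPdf.continuousAt
  exact h.const_add _

lemma hasDerivAt_aBS (α β : ℝ) (hα : 0 < α) (hβ : 0 < β) {y : ℝ} (hy : 0 < y) :
    HasDerivAt (aBS α β) (ABS α β y) y := by
  have h1 : HasDerivAt (fun t : ℝ => t / β) (1 / β) y := by
    simpa using (hasDerivAt_id y).div_const β
  have h2 : HasDerivAt (fun t : ℝ => β / t) (β * (-(y ^ 2)⁻¹)) y := by
    simpa [div_eq_mul_inv] using (hasDerivAt_inv hy.ne').const_mul β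
  have hs1 : HasDerivAt (fun t : ℝ => Real.sqrt (t / β)) (1 / (2 * Real.sqrt (y / β)) * (1 / β)) y :=
    (Real.hasDerivAt_sqrt (by positivity)).comp y h1
  have hs2 : HasDerivAt (fun t : ℝ => Real.sqrt (β / t)) (1 / (2 * Real.sqrt (β / y)) * (β * (-(y ^ 2)⁻¹))) y :=
    (Real.hasDerivAt_sqrt (by positivity : β / y ≠ 0)).comp y h2
  have h : HasDerivAt (aBS α β)
      ((1 / (2 * Real.sqrt (y / β)) * (1 / β) - 1 / (2 * Real.sqrt (β / y)) * (β * (-(y ^ 2)⁻¹))) / α) y :=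
    (hs1.sub hs2).div_const α
  convert h using 1
  have hsyβ : Real.sqrt (y / β) = Real.sqrt y / Real.sqrt β := Real.sqrt_div hy.le β
  have hsβy : Real.sqrt (β / y) = Real.sqrt β / Real.sqrt y := Real.sqrt_div hβ.le y
  have hry : y ^ ((-3 : ℝ) / 2) = (y * Real.sqrt y)⁻¹ := by
    rw [show ((-3 : ℝ) / 2) = -(1 + 1/2) by norm_num, Real.rpow_neg hy.le,
      Real.rpow_add hy, Real.rpow_one, ← Real.sqrt_eq_rpow]
  have hsy : (0:ℝ) < Real.sqrt y := Real.sqrt_pos.2 hy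
  have hsβ : (0:ℝ) < Real.sqrt β := Real.sqrt_pos.2 hβ
  have h2y : Real.sqrt y ^ 2 = y := Real.sq_sqrt hy.le
  have h2β : Real.sqrt β ^ 2 = β := Real.sq_sqrt hβ.le
  unfold ABS
  rw [hsyβ, hsβy, hry]
  set sy := Real.sqrt y with hsydef
  set sβ := Real.sqrt β with hsβdef
  rw [← h2y, ← h2β]
  field_simp
  ring

lemma ratio_to_zero (Sa Sb fa fb : ℝ → ℝ) (ℓa ℓb : ℝ)
    (hpa : ∀ y, 0 < Sa y) (hpb : ∀ y, 0 < Sb y)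
    (hda : ∀ y : ℝ, 0 < y → HasDerivAt Sa (-(fa y)) y)
    (hdb : ∀ y : ℝ, 0 < y → HasDerivAt Sb (-(fb y)) y)
    (hla : Tendsto (fun y => fa y / Sa y) atTop (nhds ℓa))
    (hlb : Tendsto (fun y => fb y / Sb y) atTop (nhds ℓb))
    (hlt : ℓa < ℓb) :
    Tendsto (fun y => Sb y / Sa y) atTop (nhds 0) := by
  have hgd : ∀ y : ℝ, 0 < y →
      HasDerivAt (fun t => Real.log (Sb t) - Real.log (Sa t)) (fa y / Sa y - fb y / Sb y) y := by
    intro y hy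
    have ha' : HasDerivAt (fun t => Real.log (Sa t)) ((Sa y)⁻¹ * (-(fa y))) y :=
      (Real.hasDerivAt_log (hpa y).ne').comp y (hda y hy)
    have hb' : HasDerivAt (fun t => Real.log (Sb t)) ((Sb y)⁻¹ * (-(fb y))) y :=
      (Real.hasDerivAt_log (hpb y).ne').comp y (hdb y hy)
    have := hb'.fun_sub ha'
    exact this.congr_deriv (by ring)
  set c : ℝ := (ℓb - ℓa) / 2 with hc
  have hcpos : 0 < c := by rw [hc]; linarith
  have hDlim : Tendsto (fun y => fa y / Sa y - fb y / Sb y) atTop (nhds (ℓa - ℓb)) := hla.sub hlb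
  have hev : ∀ᶠ y in atTop, fa y / Sa y - fb y / Sb y ≤ -c := by
    have : ∀ᶠ y in atTop, fa y / Sa y - fb y / Sb y < -c :=
      (tendsto_order.1 hDlim).2 (-c) (by rw [hc]; linarith)
    exact this.mono fun y hy => hy.le
  obtain ⟨Y₀, hY₀⟩ := hev.exists_forall_of_atTop
  set Y : ℝ := max Y₀ 1 with hYdef
  have hYpos : (0:ℝ) < Y := lt_of_lt_of_le one_pos (le_max_right _ _)
  have hG' : ∀ x : ℝ, 0 < x →
      HasDerivAt (fun t => (Real.log (Sb t) - Real.log (Sa t)) + c * t)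
        ((fa x / Sa x - fb x / Sb x) + c) x := by
    intro x hx
    have := (hgd x hx).add ((hasDerivAt_id x).const_mul c)
    simpa [Pi.add_def] using this
  have hGanti : AntitoneOn (fun t => (Real.log (Sb t) - Real.log (Sa t)) + c * t) (Set.Ici Y) := by
    apply antitoneOn_of_deriv_nonpos (convex_Ici Y)
    · intro x hx
      exact (hG' x (lt_of_lt_of_le hYpos hx)).continuousAt.continuousWithinAt
    · intro x hx
      rw [interior_Ici] at hx
      exact (hG' x (lt_trans hYpos hx)).differentiableAt.differentiableWithinAt
    · intro x hx
      rw [interior_Ici] at hx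
      rw [(hG' x (lt_trans hYpos hx)).deriv]
      have := hY₀ x (le_trans (le_max_left _ _) hx.le)
      linarith
  have hgle : ∀ᶠ y in atTop, Real.log (Sb y) - Real.log (Sa y) ≤
      ((Real.log (Sb Y) - Real.log (Sa Y)) + c * Y) - c * y := by
    filter_upwards [eventually_ge_atTop Y] with y hy
    have := hGanti (Set.self_mem_Ici) hy hy
    dsimp only at this
    linarith
  have hgbot : Tendsto (fun y => Real.log (Sb y) - Real.log (Sa y)) atTop atBot := by
    apply tendsto_atBot_mono' atTop hgle
    have h1 : Tendsto (fun y : ℝ => c * y) atTop atTop :=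
      Tendsto.const_mul_atTop hcpos tendsto_id
    have h2 : Tendsto (fun y : ℝ => -(c * y)) atTop atBot := tendsto_neg_atTop_atBot.comp h1
    have := tendsto_atBot_add_const_left atTop ((Real.log (Sb Y) - Real.log (Sa Y)) + c * Y) h2
    exact this.congr (fun y => by ring)
  have : Tendsto (fun y => Real.exp (Real.log (Sb y) - Real.log (Sa y))) atTop (nhds 0) :=
    Real.tendsto_exp_atBot.comp hgbot
  refine this.congr fun y => ?_
  rw [Real.exp_sub, Real.exp_log (hpb y), Real.exp_log (hpa y)]

lemma mix_tendsto (q ℓa ℓb : ℝ) (hq : 0 < q) (hq1 : q < 1)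
    (Sa Sb ha hb W : ℝ → ℝ)
    (hpa : ∀ y, 0 < Sa y) (hpb : ∀ y, 0 < Sb y)
    (hW : ∀ y, W y = q * Sa y / (q * Sa y + (1 - q) * Sb y))
    (hr : Tendsto (fun y => Sb y / Sa y) atTop (nhds 0))
    (hta : Tendsto ha atTop (nhds ℓa)) (htb : Tendsto hb atTop (nhds ℓb)) :
    Tendsto (fun y => W y * ha y + (1 - W y) * hb y) atTop (nhds ℓa) := by
  have hWlim : Tendsto W atTop (nhds 1) := by
    have h1 : Tendsto (fun y => q / (q + (1 - q) * (Sb y / Sa y))) atTop (nhds 1) := by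
      have hden : Tendsto (fun y => q + (1 - q) * (Sb y / Sa y)) atTop (nhds q) := by
        have := (tendsto_const_nhds (x := (1 - q)) (f := atTop)).mul hr
        simpa using (tendsto_const_nhds (x := q) (f := atTop)).add this
      have := (tendsto_const_nhds (x := q) (f := atTop)).div hden hq.ne'
      simpa [div_self hq.ne', Pi.div_def] using this
    refine h1.congr fun y => ?_
    have heq : q + (1 - q) * (Sb y / Sa y) = (q * Sa y + (1 - q) * Sb y) / Sa y := by
      field_simp [(hpa y).ne']
    rw [heq, div_div_eq_mul_div, hW y, mul_comm q (Sa y)]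
  have := (hWlim.mul hta).add (((tendsto_const_nhds (x := (1:ℝ)) (f := atTop)).sub hWlim).mul htb)
  simpa using this

theorem fmbs_hazard_limit (α₁ α₂ β₁ β₂ p : ℝ)
    (hα₁ : 0 < α₁) (hα₂ : 0 < α₂) (hβ₁ : 0 < β₁) (hβ₂ : 0 < β₂)
    (hp : 0 < p) (hp1 : p < 1)
    (S₁ S₂ h₁ h₂ w hY : ℝ → ℝ)
    (hS₁ : ∀ y, S₁ y = 1 - stdNormalCdf (aBS α₁ β₁ y))
    (hS₂ : ∀ y, S₂ y = 1 - stdNormalCdf (aBS α₂ β₂ y))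
    (hh₁ : ∀ y, h₁ y = bsPdf α₁ β₁ y / S₁ y)
    (hh₂ : ∀ y, h₂ y = bsPdf α₂ β₂ y / S₂ y)
    (hw : ∀ y, w y = p * S₁ y / (p * S₁ y + (1 - p) * S₂ y))
    (hhY : ∀ y, hY y = w y * h₁ y + (1 - w y) * h₂ y)
    (htend₁ : Tendsto h₁ atTop (nhds (1 / (2 * α₁ ^ 2 * β₁))))
    (htend₂ : Tendsto h₂ atTop (nhds (1 / (2 * α₂ ^ 2 * β₂)))) :
    (α₂ ^ 2 * β₂ < α₁ ^ 2 * β₁ → Tendsto hY atTop (nhds (1 / (2 * α₁ ^ 2 * β₁)))) ∧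
    (α₁ ^ 2 * β₁ < α₂ ^ 2 * β₂ → Tendsto hY atTop (nhds (1 / (2 * α₂ ^ 2 * β₂)))) := by
  have hpos₁ : ∀ y, 0 < S₁ y := fun y => by
    rw [hS₁ y]; linarith [stdNormalCdf_lt_one (aBS α₁ β₁ y)]
  have hpos₂ : ∀ y, 0 < S₂ y := fun y => by
    rw [hS₂ y]; linarith [stdNormalCdf_lt_one (aBS α₂ β₂ y)]
  have hder₁ : ∀ y : ℝ, 0 < y → HasDerivAt S₁ (-(bsPdf α₁ β₁ y)) y := by
    intro y hy
    have hfun : S₁ = fun y => 1 - stdNormalCdf (aBS α₁ β₁ y) := funext hS₁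
    rw [hfun]
    have := ((hasDerivAt_stdNormalCdf (aBS α₁ β₁ y)).comp y (hasDerivAt_aBS α₁ β₁ hα₁ hβ₁ hy)).const_sub 1
    simpa [bsPdf] using this
  have hder₂ : ∀ y : ℝ, 0 < y → HasDerivAt S₂ (-(bsPdf α₂ β₂ y)) y := by
    intro y hy
    have hfun : S₂ = fun y => 1 - stdNormalCdf (aBS α₂ β₂ y) := funext hS₂
    rw [hfun]
    have := ((hasDerivAt_stdNormalCdf (aBS α₂ β₂ y)).comp y (hasDerivAt_aBS α₂ β₂ hα₂ hβ₂ hy)).const_sub 1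
    simpa [bsPdf] using this
  have ht₁ : Tendsto (fun y => bsPdf α₁ β₁ y / S₁ y) atTop (nhds (1 / (2 * α₁ ^ 2 * β₁))) :=
    htend₁.congr fun y => hh₁ y
  have ht₂ : Tendsto (fun y => bsPdf α₂ β₂ y / S₂ y) atTop (nhds (1 / (2 * α₂ ^ 2 * β₂))) :=
    htend₂.congr fun y => hh₂ y
  constructor
  · intro hlt
    have hℓ : 1 / (2 * α₁ ^ 2 * β₁) < 1 / (2 * α₂ ^ 2 * β₂) := by
      apply one_div_lt_one_div_of_lt (by positivity)
      nlinarith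
    have hr := ratio_to_zero S₁ S₂ (fun y => bsPdf α₁ β₁ y) (fun y => bsPdf α₂ β₂ y) _ _
      hpos₁ hpos₂ hder₁ hder₂ ht₁ ht₂ hℓ
    have := mix_tendsto p _ _ hp hp1 S₁ S₂ h₁ h₂ w hpos₁ hpos₂ hw hr htend₁ htend₂
    exact this.congr fun y => (hhY y).symm
  · intro hlt
    have hℓ : 1 / (2 * α₂ ^ 2 * β₂) < 1 / (2 * α₁ ^ 2 * β₁) := by
      apply one_div_lt_one_div_of_lt (by positivity)
      nlinarith
    have hr := ratio_to_zero S₂ S₁ (fun y => bsPdf α₂ β₂ y) (fun y => bsPdf α₁ β₁ y) _ _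
      hpos₂ hpos₁ hder₂ hder₁ ht₂ ht₁ hℓ
    have hW' : ∀ y, 1 - w y = (1 - p) * S₂ y / ((1 - p) * S₂ y + (1 - (1 - p)) * S₁ y) := by
      intro y
      have hD : 0 < p * S₁ y + (1 - p) * S₂ y := by nlinarith [hpos₁ y, hpos₂ y]
      have hD' : 0 < (1 - p) * S₂ y + (1 - (1 - p)) * S₁ y := by nlinarith [hpos₁ y, hpos₂ y]
      rw [hw y, show p * S₁ y + (1 - p) * S₂ y = (1 - p) * S₂ y + (1 - (1 - p)) * S₁ y from by ring,
        one_sub_div hD'.ne', show (1 - p) * S₂ y + (1 - (1 - p)) * S₁ y - p * S₁ y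
          = (1 - p) * S₂ y from by ring]
    have := mix_tendsto (1 - p) _ _ (by linarith) (by linarith) S₂ S₁ h₂ h₁ (fun y => 1 - w y)
      hpos₂ hpos₁ hW' hr htend₂ htend₁
    refine this.congr fun y => ?_
    rw [hhY y]
    ring
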